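/- Let L = {𝟬, A, B, C, 𝟭} be the pentagon lattice N₅: 𝟬 < A < 𝟭, 𝟬 < B < C < 𝟭, with A ∧ B = A ∧ C = 𝟬 and A ∨ B = A ∨ C = 𝟭. Then in the quotient space X = c₀₀(L)/Δ one has 1 ⊗ B = 1 ⊗ C, and X is spanned by the two elements 1 ⊗ A and 1 ⊗ B (with 1 ⊗ 𝟭 = 1 ⊗ A + 1 ⊗ B). -/

import Mathlib

/-- The subspace `Δ ⊆ c₀₀(L)` spanned by `e_𝟬` and the vectors
`(e_A + e_B) − (e_{A∨B} + e_{A∧B})`. -/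
noncomputable def deltaSpan (L : Type*) [Lattice L] [BoundedOrder L] :
    Submodule ℝ (L →₀ ℝ) :=
  Submodule.span ℝ
    ({Finsupp.single (⊥ : L) (1 : ℝ)} ∪
      {f : L →₀ ℝ | ∃ A B : L,
        f = Finsupp.single A 1 + Finsupp.single B 1
          - (Finsupp.single (A ⊔ B) 1 + Finsupp.single (A ⊓ B) 1)})

/-- The quotient space `X = c₀₀(L)/Δ`. -/
abbrev XSpace (L : Type*) [Lattice L] [BoundedOrder L] :=
  (L →₀ ℝ) ⧸ deltaSpan L

/-- The element `a ⊗ A := q(a·e_A)` of `X`. -/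
noncomputable def tens (L : Type*) [Lattice L] [BoundedOrder L] (a : ℝ) (A : L) :
    XSpace L :=
  Submodule.Quotient.mk (Finsupp.single A a)

lemma bot_mem_deltaSpan (L : Type*) [Lattice L] [BoundedOrder L] :
    Finsupp.single (⊥ : L) (1 : ℝ) ∈ deltaSpan L :=
  Submodule.subset_span (Or.inl rfl)

lemma rel_mem_deltaSpan (L : Type*) [Lattice L] [BoundedOrder L] (A B : L) :
    Finsupp.single A 1 + Finsupp.single B 1
      - (Finsupp.single (A ⊔ B) 1 + Finsupp.single (A ⊓ B) (1 : ℝ)) ∈ deltaSpan L :=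
  Submodule.subset_span (Or.inr ⟨A, B, rfl⟩)

lemma tens_smul (L : Type*) [Lattice L] [BoundedOrder L] (a : ℝ) (A : L) :
    tens L a A = a • tens L 1 A := by
  unfold tens
  rw [← Submodule.Quotient.mk_smul, Finsupp.smul_single', mul_one]

theorem xSpace_of_pentagon_lattice {L : Type*} [Lattice L] [BoundedOrder L]
    (A B C : L)
    (hbotA : (⊥ : L) < A) (hAtop : A < ⊤)
    (hbotB : (⊥ : L) < B) (hBC : B < C) (hCtop : C < ⊤)
    (hinfAB : A ⊓ B = ⊥) (hinfAC : A ⊓ C = ⊥)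
    (hsupAB : A ⊔ B = ⊤) (hsupAC : A ⊔ C = ⊤)
    (hcarrier : ∀ x : L, x = ⊥ ∨ x = A ∨ x = B ∨ x = C ∨ x = ⊤) :
    tens L 1 B = tens L 1 C ∧
    tens L 1 (⊤ : L) = tens L 1 A + tens L 1 B ∧
    (∀ x : XSpace L, ∃ a b : ℝ, x = a • tens L 1 A + b • tens L 1 B) := by
  have relB := rel_mem_deltaSpan L A B
  have relC := rel_mem_deltaSpan L A C
  rw [hsupAB, hinfAB] at relB
  rw [hsupAC, hinfAC] at relC
  have hbot := bot_mem_deltaSpan L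
  have h1 : tens L 1 B = tens L 1 C := by
    unfold tens
    rw [Submodule.Quotient.eq]
    have := Submodule.sub_mem _ relB relC
    convert this using 1
    abel
  have h2 : tens L 1 (⊤ : L) = tens L 1 A + tens L 1 B := by
    unfold tens
    rw [← Submodule.Quotient.mk_add, Submodule.Quotient.eq]
    have := Submodule.sub_mem _ (Submodule.neg_mem _ relB) hbot
    convert this using 1
    abel
  have hbot0 : tens L 1 (⊥ : L) = 0 := by
    unfold tens
    rw [Submodule.Quotient.mk_eq_zero]
    exact hbot
  refine ⟨h1, h2, ?_⟩
  intro x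
  obtain ⟨f, rfl⟩ := Submodule.Quotient.mk_surjective (deltaSpan L) x
  induction f using Finsupp.induction_linear with
  | zero => exact ⟨0, 0, by simp⟩
  | add f g hf hg =>
      obtain ⟨a, b, ha⟩ := hf
      obtain ⟨c, d, hc⟩ := hg
      refine ⟨a + c, b + d, ?_⟩
      rw [Submodule.Quotient.mk_add, ha, hc]
      module
  | single x c =>
      have hx : Submodule.Quotient.mk (p := deltaSpan L) (Finsupp.single x c)
          = c • tens L 1 x := tens_smul L c x
      rcases hcarrier x with h | h | h | h | h <;> subst h
      · exact ⟨0, 0, by rw [hx, hbot0]; simp⟩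
      · exact ⟨c, 0, by rw [hx]; simp⟩
      · exact ⟨0, c, by rw [hx]; simp⟩
      · exact ⟨0, c, by rw [hx, ← h1]; simp⟩
      · exact ⟨c, c, by rw [hx, h2]; module⟩
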